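/- Let f : ℝ^N → ℝ be continuously differentiable and bounded below along the ray {x + αp : α > 0}, and let p be a descent direction at x, i.e., ⟨∇f(x), p⟩ < 0. Then for any 0 < c₁ < c₂ < 1 there exists a step size α > 0 satisfying the strong Wolfe conditions: f(x + αp) ≤ f(x) + c₁ α ⟨∇f(x), p⟩ and |⟨∇f(x + αp), p⟩| ≤ c₂ |⟨∇f(x), p⟩|. -/

import Mathlib

theorem strong_wolfe_exists (N : ℕ)
    (f : EuclideanSpace ℝ (Fin N) → ℝ) (x p : EuclideanSpace ℝ (Fin N))
    (hf : ContDiff ℝ 1 f)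
    (hbdd : ∃ B : ℝ, ∀ a : ℝ, 0 < a → B ≤ f (x + a • p))
    (hdesc : inner ℝ (gradient f x) p < (0:ℝ))
    (c₁ c₂ : ℝ) (hc₁ : 0 < c₁) (hc₁₂ : c₁ < c₂) (hc₂ : c₂ < 1) :
    ∃ a > (0:ℝ),
      f (x + a • p) ≤ f x + c₁ * a * inner ℝ (gradient f x) p ∧
      |(inner ℝ (gradient f (x + a • p)) p : ℝ)| ≤ c₂ * |(inner ℝ (gradient f x) p : ℝ)| := by
  obtain ⟨B, hB⟩ := hbdd
  set m : ℝ := inner ℝ (gradient f x) p with hm_def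
  have hm : m < 0 := hdesc
  clear_value m
  set φ : ℝ → ℝ := fun t => f (x + t • p) with hφ_def
  set φd : ℝ → ℝ := fun t => fderiv ℝ f (x + t • p) p with hφd_def
  have hdiff := hf.differentiable one_ne_zero
  have hgrad : ∀ t : ℝ, φd t = inner ℝ (gradient f (x + t • p)) p := by
    intro t
    have h := (hdiff (x + t • p)).hasGradientAt.hasFDerivAt
    simp only [φd]
    rw [h.fderiv, InnerProductSpace.toDual_apply_apply]
  have hφd0 : φd 0 = m := by
    rw [hgrad 0]; simp [hm_def]
  have hφderiv : ∀ t : ℝ, HasDerivAt φ (φd t) t := by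
    intro t
    have h1 : HasDerivAt (fun s : ℝ => x + s • p) p t := by
      simpa using ((hasDerivAt_id t).smul_const p).const_add x
    exact ((hdiff _).hasFDerivAt).comp_hasDerivAt t h1
  set g : ℝ → ℝ := fun t => φ t - f x - c₁ * m * t with hg_def
  have hgderiv : ∀ t : ℝ, HasDerivAt g (φd t - c₁ * m) t := by
    intro t
    have := ((hφderiv t).sub_const (f x)).sub (((hasDerivAt_id t).const_mul (c₁ * m)))
    simp only [mul_one] at this
    exact this
  have hφ0 : φ 0 = f x := by simp [hφ_def]
  have hg0 : g 0 = 0 := by simp [hg_def, hφ0]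
  have hφcont : Continuous φ := (hf.continuous).comp (by continuity)
  have hgcont : Continuous g :=
    (hφcont.sub continuous_const).sub (continuous_const.mul continuous_id)
  -- Step A : g < 0 just to the right of 0
  have hslope : Filter.Tendsto (slope g 0) (nhdsWithin 0 {(0:ℝ)}ᶜ) (nhds (φd 0 - c₁ * m)) :=
    hasDerivAt_iff_tendsto_slope.mp (hgderiv 0)
  have hneg : φd 0 - c₁ * m < 0 := by
    rw [hφd0]; nlinarith
  have hevent : ∀ᶠ t in nhdsWithin (0:ℝ) (Set.Ioi 0), slope g 0 t < 0 := by
    have := hslope.eventually_lt_const hneg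
    exact this.filter_mono (nhdsWithin_mono 0 (fun t ht => ne_of_gt ht))
  obtain ⟨δ, hδ0, hδ⟩ : ∃ δ > (0:ℝ), ∀ t ∈ Set.Ioc 0 δ, slope g 0 t < 0 := by
    rw [Filter.eventually_iff, mem_nhdsGT_iff_exists_Ioc_subset] at hevent
    obtain ⟨u, hu, hsub⟩ := hevent
    exact ⟨u, hu, fun t ht => hsub ht⟩
  have hgneg_small : ∀ t ∈ Set.Ioc (0:ℝ) δ, g t < 0 := by
    intro t ht
    have hs := hδ t ht
    rw [slope_def_field, hg0] at hs
    have ht0 : (0:ℝ) < t := ht.1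
    have : g t = (g t - 0) / (t - 0) * t := by
      rw [sub_zero, sub_zero, div_mul_cancel₀ _ ht0.ne']
    rw [this]
    exact mul_neg_of_neg_of_pos hs ht0
  -- Step B : g is positive for large t
  set A : ℝ := max δ ((f x - B) / (c₁ * (-m))) + 1 with hA_def
  have hcm : 0 < c₁ * (-m) := mul_pos hc₁ (neg_pos.mpr hm)
  have hδA : δ < A := lt_of_le_of_lt (le_max_left _ _) (lt_add_one _)
  have hA0 : 0 < A := lt_trans hδ0 hδA
  have hgA : 0 < g A := by
    have h1 : B ≤ φ A := hB A hA0
    have h2 : (f x - B) / (c₁ * (-m)) < A :=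
      lt_of_le_of_lt (le_max_right _ _) (lt_add_one _)
    have h3 : f x - B < A * (c₁ * (-m)) := (div_lt_iff₀ hcm).mp h2
    simp only [hg_def]
    nlinarith
  -- Step C : first zero of g in [δ, A]
  have hgδ : g δ < 0 := hgneg_small δ ⟨hδ0, le_refl δ⟩
  have hivt : ∃ z ∈ Set.Icc δ A, g z = 0 := by
    have := intermediate_value_Icc (le_of_lt hδA) hgcont.continuousOn
    have h0mem : (0:ℝ) ∈ Set.Icc (g δ) (g A) := ⟨le_of_lt hgδ, le_of_lt hgA⟩
    obtain ⟨z, hz, hz0⟩ := this h0mem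
    exact ⟨z, hz, hz0⟩
  set S : Set ℝ := {t | t ∈ Set.Icc δ A ∧ g t = 0} with hS_def
  have hSne : S.Nonempty := hivt
  have hSclosed : IsClosed S := by
    have : S = Set.Icc δ A ∩ g ⁻¹' {0} := by
      ext t; simp [hS_def]
    rw [this]
    exact isClosed_Icc.inter (isClosed_singleton.preimage hgcont)
  have hSbdd : BddBelow S := ⟨δ, fun t ht => ht.1.1⟩
  set α : ℝ := sInf S with hα_def
  have hαS : α ∈ S := hSclosed.csInf_mem hSne hSbdd
  have hαδ : δ ≤ α := hαS.1.1
  have hα0 : 0 < α := lt_of_lt_of_le hδ0 hαδ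
  have hgα : g α = 0 := hαS.2
  -- Step D : g < 0 on (0, α)
  have hgneg : ∀ t ∈ Set.Ioo (0:ℝ) α, g t < 0 := by
    intro t ht
    rcases le_or_gt t δ with h | h
    · exact hgneg_small t ⟨ht.1, h⟩
    · by_contra hge
      push_neg at hge
      have htA : t ≤ A := le_trans (le_of_lt ht.2) hαS.1.2
      have : ∃ z ∈ Set.Icc δ t, g z = 0 := by
        have := intermediate_value_Icc (le_of_lt h) hgcont.continuousOn
        obtain ⟨z, hz, hz0⟩ := this ⟨le_of_lt hgδ, hge⟩
        exact ⟨z, hz, hz0⟩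
      obtain ⟨z, hz, hz0⟩ := this
      have hzS : z ∈ S := ⟨⟨hz.1, le_trans hz.2 htA⟩, hz0⟩
      have : α ≤ z := csInf_le hSbdd hzS
      have : α ≤ t := le_trans this hz.2
      exact absurd ht.2 (not_lt.mpr this)
  -- Step E : mean value theorem on [0, α]
  obtain ⟨c, hc_mem, hc_eq⟩ :=
    exists_hasDerivAt_eq_slope g (fun t => φd t - c₁ * m) hα0
      hgcont.continuousOn (fun t _ => hgderiv t)
  rw [hg0, hgα] at hc_eq
  simp only [sub_zero, zero_div] at hc_eq
  have hφdc : φd c = c₁ * m := by linarith [hc_eq]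
  refine ⟨c, hc_mem.1, ?_, ?_⟩
  · have := hgneg c hc_mem
    simp only [hg_def] at this
    simp only [hφ_def] at this
    rw [show f x + c₁ * c * m = f x + c₁ * m * c by ring]
    linarith
  · rw [← hgrad c, hφdc, abs_mul, abs_of_pos hc₁]
    nlinarith [abs_nonneg m]
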